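/- The set G_k = { M(a) : a ∈ ℂ^k, a_1 ≠ 0 } is a subgroup of GL_k(ℂ): every M(a) with a_1 ≠ 0 is invertible, the identity matrix belongs to G_k, G_k is closed under matrix multiplication, and the inverse of every element of G_k again belongs to G_k. Moreover U_k = { M(a) : a ∈ ℂ^k, a_1 = 1 } is a subgroup of G_k. -/

import Mathlib

/-- The matrix `M(a)` with `M(a)_{ij} = Σ_{s_1+⋯+s_i = j, s_l ≥ 1} a_{s_1} ⋯ a_{s_i}`. -/
noncomputable def Mmat (k : ℕ) (a : Fin k → ℂ) : Matrix (Fin k) (Fin k) ℂ :=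
  fun i j =>
    ∑ s ∈ (Finset.Nat.antidiagonalTuple (i.val + 1) (j.val + 1)).filter
        (fun s => ∀ l, 0 < s l),
      ∏ l, (if h : 1 ≤ s l ∧ s l ≤ k then a ⟨s l - 1, by omega⟩ else 0)

/-- `G_k = { M(a) : a_1 ≠ 0 }`. -/
noncomputable def Gset (k : ℕ) [NeZero k] : Set (Matrix (Fin k) (Fin k) ℂ) :=
  {A | ∃ a : Fin k → ℂ, a 0 ≠ 0 ∧ A = Mmat k a}

/-- `U_k = { M(a) : a_1 = 1 }`. -/
noncomputable def Uset (k : ℕ) [NeZero k] : Set (Matrix (Fin k) (Fin k) ℂ) :=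
  {A | ∃ a : Fin k → ℂ, a 0 = 1 ∧ A = Mmat k a}

set_option linter.unusedSectionVars false

open Finset PowerSeries

namespace MmatAux

lemma exists_eq_zero_of_sum_lt {m n : ℕ} (s : Fin m → ℕ) (hs : ∑ l, s l = n) (h : n < m) :
    ∃ l, s l = 0 := by
  by_contra h'
  push_neg at h'
  have : m ≤ ∑ l, s l := by
    calc m = ∑ _l : Fin m, 1 := by simp
    _ ≤ _ := Finset.sum_le_sum fun l _ => Nat.one_le_iff_ne_zero.mpr (h' l)
  omega

lemma coeff_pow_tuple (φ : PowerSeries ℂ) (i j : ℕ) :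
    PowerSeries.coeff j (φ ^ i)
      = ∑ s ∈ Finset.Nat.antidiagonalTuple i j, ∏ l, PowerSeries.coeff (s l) φ := by
  induction i generalizing j with
  | zero =>
    cases j with
    | zero => simp
    | succ j => simp [PowerSeries.coeff_one]
  | succ i ih =>
    rw [pow_succ', PowerSeries.coeff_mul]
    have : ∀ p ∈ Finset.HasAntidiagonal.antidiagonal j,
        PowerSeries.coeff p.1 φ * PowerSeries.coeff p.2 (φ ^ i)
          = ∑ t ∈ Finset.Nat.antidiagonalTuple i p.2,
              PowerSeries.coeff p.1 φ * ∏ l, PowerSeries.coeff (t l) φ := by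
      intro p _
      rw [ih, Finset.mul_sum]
    rw [Finset.sum_congr rfl this, Finset.sum_sigma']
    refine Finset.sum_nbij' (fun x => Fin.cons x.1.1 x.2)
      (fun s => ⟨(s 0, j - s 0), Fin.tail s⟩) ?_ ?_ ?_ ?_ ?_
    · rintro ⟨⟨u, v⟩, t⟩ hx
      simp only [Finset.mem_sigma, Finset.HasAntidiagonal.mem_antidiagonal,
        Finset.Nat.mem_antidiagonalTuple] at hx
      rw [Finset.Nat.mem_antidiagonalTuple, Fin.sum_cons, hx.2, hx.1]
    · intro s hs
      rw [Finset.Nat.mem_antidiagonalTuple] at hs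
      rw [Fin.sum_univ_succ] at hs
      simp only [Finset.mem_sigma, Finset.HasAntidiagonal.mem_antidiagonal,
        Finset.Nat.mem_antidiagonalTuple]
      constructor
      · omega
      · show ∑ l, Fin.tail s l = j - s 0
        have h2 : ∑ l, Fin.tail s l = ∑ l : Fin i, s l.succ := rfl
        omega
    · rintro ⟨⟨u, v⟩, t⟩ hx
      simp only [Finset.mem_sigma, Finset.HasAntidiagonal.mem_antidiagonal,
        Finset.Nat.mem_antidiagonalTuple] at hx
      have h0 : Fin.cons (α := fun _ => ℕ) u t 0 = u := rfl
      have ht : Fin.tail (Fin.cons (α := fun _ => ℕ) u t) = t := Fin.tail_cons _ _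
      ext <;> simp_all [Fin.tail_cons]
      omega
    · intro s hs
      exact Fin.cons_self_tail s
    · rintro ⟨⟨u, v⟩, t⟩ hx
      simp [Fin.prod_univ_succ]

variable (k : ℕ) [NeZero k]

/-- Coefficient function associated to `a`. -/
noncomputable def dval (a : Fin k → ℂ) (n : ℕ) : ℂ :=
  if h : 1 ≤ n ∧ n ≤ k then a ⟨n - 1, by omega⟩ else 0

/-- The power series `Σ a_s x^s`. -/
noncomputable def fps (a : Fin k → ℂ) : PowerSeries ℂ := PowerSeries.mk (dval k a)

lemma coeff_fps (a : Fin k → ℂ) (n : ℕ) :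
    PowerSeries.coeff n (fps k a) = dval k a n := PowerSeries.coeff_mk _ _

lemma dval_zero (a : Fin k → ℂ) : dval k a 0 = 0 := by
  rw [dval, dif_neg]; omega

lemma constantCoeff_fps (a : Fin k → ℂ) : PowerSeries.constantCoeff (fps k a) = 0 := by
  rw [← PowerSeries.coeff_zero_eq_constantCoeff, coeff_fps, dval_zero]

/-- Bridge: entries of `Mmat` are coefficients of powers of `fps`. -/
lemma Mmat_eq_coeff (a : Fin k → ℂ) (i j : Fin k) :
    Mmat k a i j = PowerSeries.coeff (j.val + 1) ((fps k a) ^ (i.val + 1)) := by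
  rw [coeff_pow_tuple, Mmat]
  rw [Finset.sum_subset (Finset.filter_subset _ _)]
  · apply Finset.sum_congr rfl
    intro s _
    apply Finset.prod_congr rfl
    intro l _
    rw [coeff_fps]
    rfl
  · intro s hs hs'
    rw [Finset.mem_filter] at hs'
    push_neg at hs'
    obtain ⟨l, hl⟩ := hs' hs
    apply Finset.prod_eq_zero (Finset.mem_univ l)
    rw [dif_neg]
    omega

lemma Mmat_firstRow (a : Fin k → ℂ) (j : Fin k) : Mmat k a 0 j = a j := by
  rw [Mmat_eq_coeff]
  show PowerSeries.coeff (j.val + 1) ((fps k a) ^ 1) = a j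
  rw [pow_one, coeff_fps, dval, dif_pos (by omega)]
  exact congrArg a (Fin.ext (show j.val + 1 - 1 = j.val by omega))

lemma Mmat_tri (a : Fin k → ℂ) {i j : Fin k} (h : j.val < i.val) : Mmat k a i j = 0 := by
  rw [Mmat]
  apply Finset.sum_eq_zero
  intro s hs
  rw [Finset.mem_filter, Finset.Nat.mem_antidiagonalTuple] at hs
  exfalso
  have : i.val + 1 ≤ ∑ l, s l := by
    calc i.val + 1 = ∑ _l : Fin (i.val + 1), 1 := by simp
    _ ≤ _ := Finset.sum_le_sum fun l _ => hs.2 l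
  omega

lemma Mmat_diag (a : Fin k → ℂ) (i : Fin k) : Mmat k a i i = a 0 ^ (i.val + 1) := by
  rw [Mmat]
  have hset : (Finset.Nat.antidiagonalTuple (i.val + 1) (i.val + 1)).filter
      (fun s => ∀ l, 0 < s l) = {fun _ => 1} := by
    ext s
    simp only [Finset.mem_filter, Finset.Nat.mem_antidiagonalTuple, Finset.mem_singleton]
    constructor
    · rintro ⟨h1, h2⟩
      funext l
      have key : ∀ m ∈ Finset.univ (α := Fin (i.val + 1)), (1 : ℕ) ≤ s m := fun m _ => h2 m
      have := (Finset.sum_eq_sum_iff_of_le key).mp (by simpa using h1.symm)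
      exact (this l (Finset.mem_univ l)).symm
    · rintro rfl
      exact ⟨by simp, fun l => one_pos⟩
  rw [hset, Finset.sum_singleton]
  have hk : 1 ≤ k := Nat.pos_of_ne_zero (NeZero.ne k)
  have : ∀ l : Fin (i.val + 1),
      (if h : 1 ≤ (1:ℕ) ∧ (1:ℕ) ≤ k then a ⟨1 - 1, by omega⟩ else 0) = a 0 := by
    intro l
    rw [dif_pos ⟨le_refl 1, hk⟩]
    rfl
  rw [Finset.prod_congr rfl (fun l _ => this l), Finset.prod_const]
  simp

lemma coeff_pow_eq_zero {g : PowerSeries ℂ} (hg : PowerSeries.constantCoeff g = 0)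
    {n m : ℕ} (h : n < m) : PowerSeries.coeff n (g ^ m) = 0 := by
  rw [coeff_pow_tuple]
  apply Finset.sum_eq_zero
  intro s hs
  rw [Finset.Nat.mem_antidiagonalTuple] at hs
  obtain ⟨l, hl⟩ := exists_eq_zero_of_sum_lt s hs h
  apply Finset.prod_eq_zero (Finset.mem_univ l)
  rw [hl, PowerSeries.coeff_zero_eq_constantCoeff, hg]

/-- Truncation: coefficients of powers up to degree `k` only depend on coefficients up to `k`. -/
lemma coeff_pow_congr {f₁ f₂ : PowerSeries ℂ}
    (h : ∀ s ≤ k, PowerSeries.coeff s f₁ = PowerSeries.coeff s f₂) :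
    ∀ (i : ℕ), ∀ n ≤ k, PowerSeries.coeff n (f₁ ^ i) = PowerSeries.coeff n (f₂ ^ i) := by
  intro i
  induction i with
  | zero => intro n _; simp
  | succ i ih =>
    intro n hn
    rw [pow_succ, pow_succ, PowerSeries.coeff_mul, PowerSeries.coeff_mul]
    apply Finset.sum_congr rfl
    rintro ⟨u, v⟩ huv
    rw [Finset.HasAntidiagonal.mem_antidiagonal] at huv
    rw [ih u (by omega), h v (by omega)]

/-- The polynomial `Σ a_s x^s`. -/
noncomputable def pol (a : Fin k → ℂ) : Polynomial ℂ :=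
  ∑ l : Fin k, Polynomial.C (a l) * Polynomial.X ^ (l.val + 1)

lemma coe_pol (a : Fin k → ℂ) : ((pol k a : Polynomial ℂ) : PowerSeries ℂ) = fps k a := by
  ext n
  rw [coeff_fps, Polynomial.coeff_coe, pol, Polynomial.finset_sum_coeff]
  simp only [Polynomial.coeff_C_mul, Polynomial.coeff_X_pow]
  by_cases h : 1 ≤ n ∧ n ≤ k
  · rw [dval, dif_pos h]
    rw [Finset.sum_eq_single (⟨n - 1, by omega⟩ : Fin k)]
    · rw [if_pos (show n = (⟨n - 1, by omega⟩ : Fin k).val + 1 by show n = n - 1 + 1; omega)]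
      rw [mul_one]
    · intro l _ hl
      rw [if_neg, mul_zero]
      intro hc
      refine hl (Fin.ext ?_)
      show l.val = n - 1
      omega
    · intro h'
      exact absurd (Finset.mem_univ _) h'
  · rw [dval, dif_neg h]
    apply Finset.sum_eq_zero
    intro l _
    rw [if_neg, mul_zero]
    have := l.isLt
    omega

/-- Substitution of a power series into a polynomial. -/
noncomputable def subE (g : PowerSeries ℂ) : Polynomial ℂ →+* PowerSeries ℂ :=
  Polynomial.eval₂RingHom (PowerSeries.C) g

lemma coeff_subE (g : PowerSeries ℂ) (hg : PowerSeries.constantCoeff g = 0)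
    (p : Polynomial ℂ) (n : ℕ) :
    PowerSeries.coeff n (subE g p)
      = ∑ m ∈ Finset.range (n + 1), p.coeff m * PowerSeries.coeff n (g ^ m) := by
  rw [subE, Polynomial.coe_eval₂RingHom, Polynomial.eval₂_eq_sum, Polynomial.sum, map_sum]
  have hterm : ∀ m, PowerSeries.coeff n (PowerSeries.C (p.coeff m) * g ^ m)
      = p.coeff m * PowerSeries.coeff n (g ^ m) := by
    intro m
    rw [PowerSeries.coeff_C_mul]
  rw [Finset.sum_congr rfl (fun m _ => hterm m)]
  rw [← Finset.sum_subset (Finset.inter_subset_left (s₂ := Finset.range (n + 1))),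
    Finset.sum_subset (Finset.inter_subset_right (s₁ := p.support))]
  · intro m hm hm'
    rw [Finset.mem_inter] at hm'
    have : m ∉ p.support := fun hc => hm' ⟨hc, hm⟩
    rw [Polynomial.notMem_support_iff.mp this, zero_mul]
  · intro m hm hm'
    rw [Finset.mem_inter] at hm'
    have hm2 : m ∉ Finset.range (n + 1) := fun hc => hm' ⟨hm, hc⟩
    rw [Finset.mem_range, not_lt] at hm2
    rw [coeff_pow_eq_zero hg (by omega), mul_zero]

/-- Key multiplication formula. -/
lemma mul_entry (a b : Fin k → ℂ) (i j : Fin k) :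
    (Mmat k a * Mmat k b) i j
      = PowerSeries.coeff (j.val + 1) ((subE (fps k b) (pol k a)) ^ (i.val + 1)) := by
  rw [← map_pow, coeff_subE _ (constantCoeff_fps k b)]
  rw [Matrix.mul_apply]
  have hjk : j.val + 1 + 1 ≤ k + 1 := by have := j.isLt; omega
  rw [Finset.sum_subset (Finset.range_subset_range.mpr hjk) (by
    intro m hm hm'
    rw [Finset.mem_range] at hm hm'
    rw [coeff_pow_eq_zero (constantCoeff_fps k b) (by omega), mul_zero])]
  rw [Finset.sum_range_succ']
  have h0 : (pol k a ^ (i.val + 1)).coeff 0 * PowerSeries.coeff (j.val + 1) ((fps k b) ^ 0)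
      = 0 := by
    rw [pow_zero, PowerSeries.coeff_one, if_neg (by omega), mul_zero]
  rw [h0, add_zero, ← Fin.sum_univ_eq_sum_range]
  apply Finset.sum_congr rfl
  intro m _
  rw [Mmat_eq_coeff, Mmat_eq_coeff]
  congr 1
  rw [← Polynomial.coeff_coe, ← coe_pol]
  push_cast
  rfl

/-- Closure of `Mmat` matrices under multiplication. -/
lemma mul_closed (a b : Fin k → ℂ) :
    Mmat k a * Mmat k b = Mmat k (fun l => (Mmat k a * Mmat k b) 0 l) := by
  set c : Fin k → ℂ := fun l => (Mmat k a * Mmat k b) 0 l with hc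
  set h : PowerSeries ℂ := subE (fps k b) (pol k a) with hh
  have hcongr : ∀ s ≤ k, PowerSeries.coeff s (fps k c) = PowerSeries.coeff s h := by
    intro s hs
    rcases Nat.eq_zero_or_pos s with rfl | hs1
    · rw [coeff_fps, dval_zero]
      rw [hh, coeff_subE _ (constantCoeff_fps k b)]
      rw [Finset.sum_range_one, pow_zero, PowerSeries.coeff_zero_eq_constantCoeff]
      rw [map_one, mul_one]
      rw [← Polynomial.coeff_coe, coe_pol, coeff_fps, dval_zero]
    · have hs2 : s - 1 < k := by omega
      have key := mul_entry k a b 0 ⟨s - 1, hs2⟩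
      rw [coeff_fps, dval, dif_pos ⟨hs1, hs⟩]
      have : c ⟨s - 1, by omega⟩ = (Mmat k a * Mmat k b) 0 ⟨s - 1, hs2⟩ := rfl
      rw [this, key]
      show PowerSeries.coeff (s - 1 + 1) (h ^ (0 + 1)) = PowerSeries.coeff s h
      rw [Nat.sub_add_cancel hs1, pow_one]
  apply Matrix.ext
  intro i j
  rw [mul_entry, Mmat_eq_coeff]
  exact (coeff_pow_congr k hcongr (i.val + 1) (j.val + 1) (by have := j.isLt; omega)).symm

/-- `Mmat` of the delta function is the identity. -/
lemma Mmat_delta : Mmat k (fun l => if (0 : Fin k) = l then 1 else 0) = 1 := by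
  set d : Fin k → ℂ := fun l => if (0 : Fin k) = l then 1 else 0 with hd
  apply Matrix.ext
  intro i j
  rcases lt_trichotomy i.val j.val with h | h | h
  · rw [Matrix.one_apply_ne (fun hc => by rw [hc] at h; omega)]
    rw [Mmat]
    apply Finset.sum_eq_zero
    intro s hs
    rw [Finset.mem_filter, Finset.Nat.mem_antidiagonalTuple] at hs
    have : ∃ l, 2 ≤ s l := by
      by_contra hc
      push_neg at hc
      have h1 : ∀ l ∈ Finset.univ (α := Fin (i.val + 1)), s l = 1 := by
        intro l _
        have := hs.2 l
        have := hc l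
        omega
      rw [Finset.sum_congr rfl h1] at hs
      simp at hs
      omega
    obtain ⟨l, hl⟩ := this
    apply Finset.prod_eq_zero (Finset.mem_univ l)
    by_cases hcase : 1 ≤ s l ∧ s l ≤ k
    · rw [dif_pos hcase]
      show (if (0 : Fin k) = (⟨s l - 1, by omega⟩ : Fin k) then (1:ℂ) else 0) = 0
      rw [if_neg]
      intro hc
      have := congrArg Fin.val hc
      simp at this
      omega
    · rw [dif_neg hcase]
  · have hij : i = j := Fin.ext h
    subst hij
    rw [Mmat_diag, Matrix.one_apply_eq]
    simp [hd]
  · rw [Mmat_tri k _ h, Matrix.one_apply_ne (fun hc => by rw [hc] at h; omega)]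

lemma Mmat_isUnit {a : Fin k → ℂ} (ha : a 0 ≠ 0) : IsUnit (Mmat k a) := by
  rw [Matrix.isUnit_iff_isUnit_det]
  have htri : (Mmat k a).BlockTriangular id := by
    intro i j h
    exact Mmat_tri k a h
  rw [Matrix.det_of_upperTriangular htri]
  apply isUnit_iff_ne_zero.mpr
  rw [Finset.prod_ne_zero_iff]
  intro i _
  rw [Mmat_diag]
  exact pow_ne_zero _ ha

lemma mul_00 (a b : Fin k → ℂ) : (Mmat k a * Mmat k b) 0 0 = a 0 * b 0 := by
  rw [Matrix.mul_apply]
  rw [Finset.sum_eq_single 0]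
  · rw [Mmat_firstRow, Mmat_diag]
    simp
  · intro m _ hm
    have hmv : 0 < m.val := Nat.pos_of_ne_zero (fun hc => hm (Fin.ext (by simp [hc])))
    rw [Mmat_tri k b (by simpa using hmv), mul_zero]
  · intro h; exact absurd (Finset.mem_univ _) h

lemma inv_mem (a : Fin k → ℂ) (ha : a 0 ≠ 0) :
    ∃ b : Fin k → ℂ, b 0 * a 0 = 1 ∧ (Mmat k a)⁻¹ = Mmat k b := by
  set A := Mmat k a with hA
  have hu : IsUnit A := Mmat_isUnit k ha
  have hdet := (Matrix.isUnit_iff_isUnit_det A).mp hu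
  have h1 : A⁻¹ * A = 1 := Matrix.nonsing_inv_mul A hdet
  have h2 : A * A⁻¹ = 1 := Matrix.mul_nonsing_inv A hdet
  set b : Fin k → ℂ := fun l => A⁻¹ 0 l with hb
  have hrow : ∀ l, Mmat k b 0 l = A⁻¹ 0 l := fun l => Mmat_firstRow k b l
  have hMul : Mmat k b * A = 1 := by
    have hcl := mul_closed k b a
    have hc : (fun l => (Mmat k b * Mmat k a) 0 l)
        = (fun l => if (0 : Fin k) = l then 1 else 0) := by
      funext l
      rw [Matrix.mul_apply]
      have heach : ∀ m, Mmat k b 0 m * Mmat k a m l = A⁻¹ 0 m * A m l := fun m => by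
        rw [hrow, hA]
      rw [Finset.sum_congr rfl (fun m _ => heach m), ← Matrix.mul_apply, h1, Matrix.one_apply]
    rw [hA, hcl, hc, Mmat_delta]
  have hinv : A⁻¹ = Mmat k b := by
    calc A⁻¹ = 1 * A⁻¹ := (one_mul _).symm
    _ = (Mmat k b * A) * A⁻¹ := by rw [hMul]
    _ = Mmat k b * (A * A⁻¹) := by rw [Matrix.mul_assoc]
    _ = Mmat k b := by rw [h2, mul_one]
  have hb0 : b 0 * a 0 = 1 := by
    have h00 := congrArg (fun M : Matrix (Fin k) (Fin k) ℂ => M 0 0) hMul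
    simp only [hA] at h00
    rw [mul_00 k b a, Matrix.one_apply_eq] at h00
    exact h00
  exact ⟨b, hb0, hinv⟩

end MmatAux

/-- `G_k` is a subgroup of `GL_k(ℂ)`: every `M(a)` with `a_1 ≠ 0` is invertible, the
identity belongs to `G_k`, `G_k` is closed under multiplication and inversion; and
`U_k` is a subgroup of `G_k`. -/
theorem Gset_Uset_subgroup (k : ℕ) [NeZero k] :
    (∀ A ∈ Gset k, IsUnit A) ∧
    (1 ∈ Gset k) ∧
    (∀ A ∈ Gset k, ∀ B ∈ Gset k, A * B ∈ Gset k) ∧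
    (∀ A ∈ Gset k, A⁻¹ ∈ Gset k) ∧
    (Uset k ⊆ Gset k) ∧
    (1 ∈ Uset k) ∧
    (∀ A ∈ Uset k, ∀ B ∈ Uset k, A * B ∈ Uset k) ∧
    (∀ A ∈ Uset k, A⁻¹ ∈ Uset k) := by
  have hδ : Mmat k (fun l => if (0 : Fin k) = l then 1 else 0) = 1 := MmatAux.Mmat_delta k
  refine ⟨?_, ?_, ?_, ?_, ?_, ?_, ?_, ?_⟩
  · rintro A ⟨a, ha, rfl⟩
    exact MmatAux.Mmat_isUnit k ha
  · exact ⟨_, by simp, hδ.symm⟩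
  · rintro A ⟨a, ha, rfl⟩ B ⟨b, hb, rfl⟩
    refine ⟨fun l => (Mmat k a * Mmat k b) 0 l, ?_, MmatAux.mul_closed k a b⟩
    show (Mmat k a * Mmat k b) 0 0 ≠ 0
    rw [MmatAux.mul_00]
    exact mul_ne_zero ha hb
  · rintro A ⟨a, ha, rfl⟩
    obtain ⟨b, hb, hinv⟩ := MmatAux.inv_mem k a ha
    refine ⟨b, ?_, hinv⟩
    intro hc
    rw [hc, zero_mul] at hb
    exact zero_ne_one hb
  · rintro A ⟨a, ha, rfl⟩
    exact ⟨a, by rw [ha]; exact one_ne_zero, rfl⟩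
  · exact ⟨_, by simp, hδ.symm⟩
  · rintro A ⟨a, ha, rfl⟩ B ⟨b, hb, rfl⟩
    refine ⟨fun l => (Mmat k a * Mmat k b) 0 l, ?_, MmatAux.mul_closed k a b⟩
    show (Mmat k a * Mmat k b) 0 0 = 1
    rw [MmatAux.mul_00, ha, hb, mul_one]
  · rintro A ⟨a, ha, rfl⟩
    obtain ⟨b, hb, hinv⟩ := MmatAux.inv_mem k a (by rw [ha]; exact one_ne_zero)
    refine ⟨b, ?_, hinv⟩
    rwa [ha, mul_one] at hb
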